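/- Let n ≥ 1 and let f be a McNaughton homeomorphism of [0,1]^n. Then f preserves Lebesgue measure: for every Lebesgue-measurable subset U of [0,1]^n, the image f(U) is Lebesgue measurable and μ(f(U)) = μ(U), where μ denotes n-dimensional Lebesgue measure. -/

import Mathlib

open MeasureTheory

section Aux

open Set

variable {n : ℕ}


lemma aux_hyperplane_null (c : Fin n → ℝ) (hc : c ≠ 0) (d : ℝ) :
    volume {x : Fin n → ℝ | ∑ j, c j * x j = d} = 0 := by
  obtain ⟨j0, hj0⟩ : ∃ j, c j ≠ 0 := by
    by_contra h; push_neg at h; exact hc (funext h)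
  set φ : (Fin n → ℝ) →ₗ[ℝ] ℝ := ∑ j, c j • LinearMap.proj j with hφ
  have hφapp : ∀ x, φ x = ∑ j, c j * x j := by
    intro x
    simp [hφ, LinearMap.sum_apply, LinearMap.smul_apply, LinearMap.proj_apply, smul_eq_mul]
  have hker : LinearMap.ker φ ≠ ⊤ := by
    intro h
    have : φ (Pi.single j0 1) = 0 := by
      rw [← LinearMap.mem_ker, h]; trivial
    rw [hφapp] at this
    rw [Finset.sum_eq_single j0 (fun b _ hb => by simp [Pi.single_apply, hb]) (by simp)] at this
    simp [Pi.single_apply] at this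
    exact hj0 this
  set x0 : Fin n → ℝ := Pi.single j0 (d / c j0) with hx0
  have hφx0 : φ x0 = d := by
    rw [hφapp, hx0]
    rw [Finset.sum_eq_single j0 (fun b _ hb => by simp [Pi.single_apply, hb]) (by simp)]
    simp [Pi.single_apply]
    field_simp
  have hset : {x : Fin n → ℝ | ∑ j, c j * x j = d}
      = (fun h => h + (-x0)) ⁻¹' (LinearMap.ker φ : Set (Fin n → ℝ)) := by
    ext x
    simp only [mem_setOf_eq, mem_preimage, SetLike.mem_coe, LinearMap.mem_ker, map_add,
      map_neg, hφx0, ← hφapp x]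
    constructor <;> intro h <;> linarith
  rw [hset, measure_preimage_add_right]
  exact Measure.addHaar_submodule volume _ hker

lemma aux_affine_id (P : Matrix (Fin n) (Fin n) ℝ) (q : Fin n → ℝ) (E : Set (Fin n → ℝ))
    (hE : volume E ≠ 0) (h : ∀ x ∈ E, P.mulVec x + q = x) : P = 1 := by
  by_contra hP
  have : ∃ r, (P - 1) r ≠ 0 := by
    by_contra hr; push_neg at hr
    exact hP (sub_eq_zero.mp (funext hr))
  obtain ⟨r, hr⟩ := this
  apply hE
  refine measure_mono_null (fun x hx => ?_) (aux_hyperplane_null ((P - 1) r) hr (-q r))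
  have h1 := congrFun (h x hx) r
  have h2 : ((P - 1).mulVec x) r = -q r := by
    rw [Matrix.sub_mulVec, Matrix.one_mulVec]
    simp only [Pi.sub_apply]
    have : P.mulVec x r + q r = x r := h1
    linarith
  simpa [Matrix.mulVec, dotProduct] using h2

lemma aux_affine_image_volume (M : Matrix (Fin n) (Fin n) ℝ) (q : Fin n → ℝ)
    (s : Set (Fin n → ℝ)) :
    volume ((fun x => M.mulVec x + q) '' s) = ENNReal.ofReal |M.det| * volume s := by
  have h1 : (fun x => M.mulVec x + q) '' s = (fun y => y + q) '' (Matrix.toLin' M '' s) := by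
    rw [Set.image_image]; simp [Matrix.toLin'_apply]
  rw [h1, Set.image_add_right, measure_preimage_add_right,
    Measure.addHaar_image_linearMap, LinearMap.det_toLin']

lemma aux_affine_image_measurable (M : Matrix (Fin n) (Fin n) ℝ) (hM : M.det ≠ 0)
    (q : Fin n → ℝ) (s : Set (Fin n → ℝ)) (hs : MeasurableSet s) :
    MeasurableSet ((fun x => M.mulVec x + q) '' s) := by
  have hunit : IsUnit M.det := isUnit_iff_ne_zero.mpr hM
  have h1 : (fun x => M.mulVec x + q) '' s = (fun y => M⁻¹.mulVec (y - q)) ⁻¹' s := by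
    ext y
    constructor
    · rintro ⟨x, hx, rfl⟩
      simpa [Matrix.mulVec_mulVec, Matrix.nonsing_inv_mul M hunit, Matrix.one_mulVec] using hx
    · intro hy
      refine ⟨M⁻¹.mulVec (y - q), hy, ?_⟩
      show M.mulVec (M⁻¹.mulVec (y - q)) + q = y
      rw [Matrix.mulVec_mulVec, Matrix.mul_nonsing_inv M hunit, Matrix.one_mulVec]
      abel
  rw [h1]
  have hcont : Continuous (fun y : Fin n → ℝ => M⁻¹.mulVec (y - q)) := by
    have : Continuous (fun y : Fin n → ℝ => Matrix.toLin' M⁻¹ (y - q)) :=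
      (LinearMap.continuous_of_finiteDimensional _).comp (by continuity)
    simpa [Matrix.toLin'_apply] using this
  exact hs.preimage hcont.measurable



lemma aux_pieces (f : (Fin n → ℝ) → (Fin n → ℝ))
    (hc : ContinuousOn f (Set.Icc 0 1))
    (k : Fin n → ℕ) (a : ∀ i, Fin (k i) → Fin n → ℤ) (b : ∀ i, Fin (k i) → ℤ)
    (hab : ∀ i, ∀ x ∈ Set.Icc (0 : Fin n → ℝ) 1, ∃ l,
      f x i = (∑ j, (a i l j : ℝ) * x j) + (b i l : ℝ)) :
    ∃ (m : ℕ) (MM : ℕ → Matrix (Fin n) (Fin n) ℝ) (cc : ℕ → Fin n → ℝ)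
      (D : ℕ → Set (Fin n → ℝ)),
      (∀ i, ∃ Mz : Matrix (Fin n) (Fin n) ℤ, MM i = Mz.map Int.cast) ∧
      (∀ i, MeasurableSet (D i)) ∧
      Pairwise (Function.onFun Disjoint D) ∧
      (∀ i, ∀ x ∈ D i, x ∈ Set.Icc (0 : Fin n → ℝ) 1 ∧ f x = (MM i).mulVec x + cc i) ∧
      (Set.Icc (0 : Fin n → ℝ) 1 ⊆ ⋃ i ∈ Finset.range m, D i) := by
  classical
  set S := (∀ i, Fin (k i)) with hS
  set m := Fintype.card S with hm
  set e : Fin m ≃ S := (Fintype.equivFin S).symm with he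
  set Mr : S → Matrix (Fin n) (Fin n) ℝ := fun s => Matrix.of fun i j => (a i (s i) j : ℝ)
    with hMr
  set cv : S → (Fin n → ℝ) := fun s i => (b i (s i) : ℝ) with hcv
  set A : S → Set (Fin n → ℝ) :=
    fun s => Set.Icc 0 1 ∩ {x | f x = (Mr s).mulVec x + cv s} with hA
  have hAclosed : ∀ s, IsClosed (A s) := by
    intro s
    have hT : Continuous fun x : Fin n → ℝ => (Mr s).mulVec x + cv s := by
      have : Continuous fun x : Fin n → ℝ => Matrix.toLin' (Mr s) x + cv s :=
        (LinearMap.continuous_of_finiteDimensional _).add continuous_const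
      simpa [Matrix.toLin'_apply] using this
    have hsub : ContinuousOn (fun x => f x - ((Mr s).mulVec x + cv s))
        (Set.Icc (0 : Fin n → ℝ) 1) := hc.sub hT.continuousOn
    have := hsub.preimage_isClosed_of_isClosed isClosed_Icc isClosed_singleton
      (t := ({0} : Set (Fin n → ℝ)))
    convert this using 1
    ext x
    simp only [hA, Set.mem_inter_iff, Set.mem_setOf_eq, Set.mem_preimage,
      Set.mem_singleton_iff, sub_eq_zero]
  set AA : ℕ → Set (Fin n → ℝ) := fun i => if h : i < m then A (e ⟨i, h⟩) else ∅ with hAA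
  refine ⟨m, fun i => if h : i < m then Mr (e ⟨i, h⟩) else 1,
    fun i => if h : i < m then cv (e ⟨i, h⟩) else 0, disjointed AA, ?_, ?_, ?_, ?_, ?_⟩
  · intro i
    by_cases h : i < m
    · refine ⟨Matrix.of fun i' j => a i' ((e ⟨i, h⟩) i') j, ?_⟩
      simp only [dif_pos h]
      ext i' j
      simp [hMr, Matrix.map_apply]
    · refine ⟨1, ?_⟩
      simp only [dif_neg h]
      rw [Matrix.map_one _ Int.cast_zero Int.cast_one]
  · exact MeasurableSet.disjointed fun i => by
      by_cases h : i < m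
      · rw [hAA]; simp only [dif_pos h]; exact (hAclosed _).measurableSet
      · rw [hAA]; simp only [dif_neg h]; exact MeasurableSet.empty
  · exact disjoint_disjointed AA
  · intro i x hx
    have hx' : x ∈ AA i := disjointed_subset AA i hx
    by_cases h : i < m
    · rw [hAA] at hx'; simp only [dif_pos h] at hx'
      refine ⟨hx'.1, ?_⟩
      simp only [dif_pos h]
      exact hx'.2
    · rw [hAA] at hx'; simp only [dif_neg h] at hx'
      exact absurd hx' (Set.notMem_empty x)
  · intro x hx
    have hcov : ∃ s, x ∈ A s := by
      choose l hl using fun i => hab i x hx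
      refine ⟨l, hx, ?_⟩
      funext i
      rw [hl i]
      simp [hMr, hcv, Matrix.mulVec, dotProduct]
    obtain ⟨s, hs⟩ := hcov
    have hidx : ((Fintype.equivFin S) s : ℕ) < m := (Fintype.equivFin S s).isLt
    have : x ∈ ⋃ i, disjointed AA i := by
      rw [iUnion_disjointed]
      refine Set.mem_iUnion.mpr ⟨(Fintype.equivFin S s : ℕ), ?_⟩
      rw [hAA]
      simp only [dif_pos hidx]
      have : e ⟨((Fintype.equivFin S) s : ℕ), hidx⟩ = s := by
        rw [he]; simp [Fin.eta]
      rwa [this]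
    obtain ⟨i, hi⟩ := Set.mem_iUnion.mp this
    have him : i < m := by
      by_contra h
      have : disjointed AA i ⊆ AA i := disjointed_subset AA i
      rw [hAA] at this; simp only [dif_neg h] at this
      exact Set.notMem_empty x (this hi)
    exact Set.mem_biUnion (Finset.mem_range.mpr him) hi

lemma aux_image_measurable {f g : (Fin n → ℝ) → (Fin n → ℝ)}
    (hbij : Set.BijOn f (Set.Icc 0 1) (Set.Icc 0 1))
    (hgf : ∀ x ∈ Set.Icc (0 : Fin n → ℝ) 1, g (f x) = x)
    (hfg : ∀ y ∈ Set.Icc (0 : Fin n → ℝ) 1, f (g y) = y)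
    (hg : ContinuousOn g (Set.Icc 0 1))
    {U : Set (Fin n → ℝ)} (hU : U ⊆ Set.Icc 0 1) (hUm : MeasurableSet U) :
    MeasurableSet (f '' U) := by
  have hIcc : MeasurableSet (Set.Icc (0 : Fin n → ℝ) 1) := measurableSet_Icc
  have himg : f '' U = Set.Icc 0 1 ∩ g ⁻¹' U := by
    ext y; constructor
    · rintro ⟨x, hx, rfl⟩
      exact ⟨hbij.mapsTo (hU hx), show g (f x) ∈ U by rw [hgf x (hU hx)]; exact hx⟩
    · rintro ⟨hy, hgy⟩
      exact ⟨g y, hgy, hfg y hy⟩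
  have h2 : Set.Icc (0 : Fin n → ℝ) 1 ∩ g ⁻¹' U
      = Subtype.val '' ((Set.Icc (0 : Fin n → ℝ) 1).restrict g ⁻¹' U) := by
    ext y
    simp only [Set.mem_inter_iff, Set.mem_preimage, Set.mem_image, Set.restrict_apply,
      Subtype.exists, exists_and_right, exists_eq_right]
    constructor
    · rintro ⟨hy, hgy⟩; exact ⟨hy, hgy⟩
    · rintro ⟨hy, hgy⟩; exact ⟨hy, hgy⟩
  rw [himg, h2]
  exact hIcc.subtype_image (hg.restrict.measurable hUm)

lemma aux_det_map (A : Matrix (Fin n) (Fin n) ℤ) :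
    (A.map (Int.cast : ℤ → ℝ)).det = (A.det : ℝ) := by
  have h : A.map (Int.cast : ℤ → ℝ) = A.map ⇑(Int.castRingHom ℝ) := by
    simp [Int.coe_castRingHom]
  rw [h, ← RingHom.mapMatrix_apply, ← RingHom.map_det]
  simp

lemma aux_map_mul (A B : Matrix (Fin n) (Fin n) ℤ) :
    (A * B).map (Int.cast : ℤ → ℝ) = A.map (Int.cast : ℤ → ℝ) * B.map (Int.cast : ℤ → ℝ) := by
  have h : ∀ M : Matrix (Fin n) (Fin n) ℤ, M.map (Int.cast : ℤ → ℝ) = M.map ⇑(Int.castRingHom ℝ) := by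
    intro M; simp [Int.coe_castRingHom]
  rw [h, h, h, Matrix.map_mul]

lemma aux_main
    (f g : (Fin n → ℝ) → (Fin n → ℝ))
    (hbij : Set.BijOn f (Set.Icc 0 1) (Set.Icc 0 1))
    (hgf : ∀ x ∈ Set.Icc (0 : Fin n → ℝ) 1, g (f x) = x)
    (m m' : ℕ)
    (MM NN : ℕ → Matrix (Fin n) (Fin n) ℝ) (cc dd : ℕ → Fin n → ℝ)
    (D Eg : ℕ → Set (Fin n → ℝ))
    (hMint : ∀ i, ∃ Mz : Matrix (Fin n) (Fin n) ℤ, MM i = Mz.map Int.cast)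
    (hNint : ∀ j, ∃ Nz : Matrix (Fin n) (Fin n) ℤ, NN j = Nz.map Int.cast)
    (hDm : ∀ i, MeasurableSet (D i)) (hEm : ∀ j, MeasurableSet (Eg j))
    (hDdisj : Pairwise (Function.onFun Disjoint D))
    (hEdisj : Pairwise (Function.onFun Disjoint Eg))
    (hD : ∀ i, ∀ x ∈ D i, x ∈ Set.Icc (0 : Fin n → ℝ) 1 ∧ f x = (MM i).mulVec x + cc i)
    (hE : ∀ j, ∀ y ∈ Eg j, y ∈ Set.Icc (0 : Fin n → ℝ) 1 ∧ g y = (NN j).mulVec y + dd j)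
    (hcovD : Set.Icc (0 : Fin n → ℝ) 1 ⊆ ⋃ i ∈ Finset.range m, D i)
    (hcovE : Set.Icc (0 : Fin n → ℝ) 1 ⊆ ⋃ j ∈ Finset.range m', Eg j)
    (U : Set (Fin n → ℝ)) (hU : U ⊆ Set.Icc 0 1) (hUm : MeasurableSet U) :
    volume (f '' U) = volume U := by
  classical
  set TT : ℕ → (Fin n → ℝ) → (Fin n → ℝ) := fun i x => (MM i).mulVec x + cc i with hTT
  set C : ℕ × ℕ → Set (Fin n → ℝ) := fun p => D p.1 ∩ TT p.1 ⁻¹' (Eg p.2) with hC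
  have hTTc : ∀ i, Continuous (TT i) := by
    intro i
    have : Continuous fun x : Fin n → ℝ => Matrix.toLin' (MM i) x + cc i :=
      (LinearMap.continuous_of_finiteDimensional _).add continuous_const
    simpa [hTT, Matrix.toLin'_apply] using this
  have hCm : ∀ p, MeasurableSet (C p) := fun p =>
    (hDm _).inter ((hEm _).preimage (hTTc _).measurable)
  have hCdisj : ∀ p q : ℕ × ℕ, p ≠ q → Disjoint (C p) (C q) := by
    intro p q hpq
    rcases eq_or_ne p.1 q.1 with h1 | h1
    · have h2 : p.2 ≠ q.2 := fun h2 => hpq (Prod.ext h1 h2)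
      refine Disjoint.mono Set.inter_subset_right ?_ ((hEdisj h2).preimage (TT p.1))
      rw [hC]; simp only [h1]; exact Set.inter_subset_right
    · exact Disjoint.mono Set.inter_subset_left Set.inter_subset_left (hDdisj h1)
  have hfC : ∀ p : ℕ × ℕ, ∀ x ∈ C p, f x = TT p.1 x := fun p x hx => (hD p.1 x hx.1).2
  have hdet : ∀ p : ℕ × ℕ, volume (C p) ≠ 0 → |(MM p.1).det| = 1 := by
    intro p hp
    have hid : ∀ x ∈ C p,
        ((NN p.2) * (MM p.1)).mulVec x + ((NN p.2).mulVec (cc p.1) + dd p.2) = x := by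
      intro x hx
      have hxQ := (hD p.1 x hx.1).1
      have h3 := hgf x hxQ
      rw [hfC p x hx] at h3
      rw [(hE p.2 _ hx.2).2] at h3
      rw [hTT] at h3
      simp only at h3
      rw [Matrix.mulVec_add, Matrix.mulVec_mulVec] at h3
      rw [← add_assoc]; exact h3
    have hone : (NN p.2) * (MM p.1) = 1 := aux_affine_id _ _ _ hp hid
    obtain ⟨Mz, hMz⟩ := hMint p.1
    obtain ⟨Nz, hNz⟩ := hNint p.2
    have hcast : ((Nz * Mz).map (Int.cast : ℤ → ℝ)) = 1 := by
      rw [aux_map_mul, ← hMz, ← hNz, hone]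
    have hdetz : Nz.det * Mz.det = 1 := by
      have h4 : (((Nz * Mz).det : ℤ) : ℝ) = 1 := by
        rw [← aux_det_map, hcast, Matrix.det_one]
      have h5 : (Nz * Mz).det = 1 := by exact_mod_cast h4
      rwa [Matrix.det_mul] at h5
    have hMzdet : Mz.det = 1 ∨ Mz.det = -1 := by
      have : IsUnit Mz.det := isUnit_of_mul_isUnit_right (by rw [hdetz]; exact isUnit_one)
      exact Int.isUnit_iff.mp this
    have hMMdet : (MM p.1).det = (Mz.det : ℝ) := by
      rw [hMz, aux_det_map]
    rcases hMzdet with h | h <;> rw [hMMdet, h] <;> simp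
  set F : Finset (ℕ × ℕ) := Finset.range m ×ˢ Finset.range m' with hF
  have hcovC : Set.Icc (0 : Fin n → ℝ) 1 ⊆ ⋃ p ∈ F, C p := by
    intro x hx
    obtain ⟨i, hi, hxD⟩ : ∃ i ∈ Finset.range m, x ∈ D i := by
      simpa using hcovD hx
    obtain ⟨j, hj, hfxE⟩ : ∃ j ∈ Finset.range m', f x ∈ Eg j := by
      simpa using hcovE (hbij.mapsTo hx)
    refine Set.mem_biUnion
      (show ((i, j) : ℕ × ℕ) ∈ F from Finset.mem_product.mpr ⟨hi, hj⟩) ?_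
    refine ⟨hxD, ?_⟩
    have h5 : TT i x = f x := ((hD i x hxD).2).symm
    show TT i x ∈ Eg j
    rw [h5]
    exact hfxE
  set Fbad := F.filter (fun p => volume (C p) = 0) with hFbad
  set Fgood := F.filter (fun p => volume (C p) ≠ 0) with hFgood
  set Z := ⋃ p ∈ Fbad, C p with hZ
  have hZ0 : volume Z = 0 := by
    rw [hZ, ← Finset.set_biUnion_coe, measure_biUnion_null_iff (Fbad.countable_toSet)]
    intro p hp
    exact (Finset.mem_filter.mp hp).2
  have hZm : MeasurableSet Z := Fbad.measurableSet_biUnion (fun p _ => hCm p)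
  set U' := U \ Z with hU'def
  have hU'm : MeasurableSet U' := hUm.diff hZm
  have hU'v : volume U' = volume U := measure_diff_null hZ0
  have hgoodU : ∀ x ∈ U', ∃ p ∈ Fgood, x ∈ C p := by
    intro x hx
    obtain ⟨p, hpF, hxC⟩ : ∃ p ∈ F, x ∈ C p := by
      simpa using hcovC (hU hx.1)
    refine ⟨p, Finset.mem_filter.mpr ⟨hpF, ?_⟩, hxC⟩
    intro h0
    exact hx.2 (Set.mem_biUnion (Finset.mem_filter.mpr ⟨hpF, h0⟩) hxC)
  have himg' : f '' U' = ⋃ p ∈ Fgood, TT p.1 '' (U' ∩ C p) := by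
    ext y; constructor
    · rintro ⟨x, hx, rfl⟩
      obtain ⟨p, hp, hxC⟩ := hgoodU x hx
      exact Set.mem_biUnion hp ⟨x, ⟨hx, hxC⟩, (hfC p x hxC).symm⟩
    · intro hy
      rw [Set.mem_iUnion₂] at hy
      obtain ⟨p, hp, hy⟩ := hy
      obtain ⟨x, hx, rfl⟩ := hy
      exact ⟨x, hx.1, hfC p x hx.2⟩
  have himgd : (↑Fgood : Set (ℕ × ℕ)).PairwiseDisjoint
      (fun p => TT p.1 '' (U' ∩ C p)) := by
    intro p hp q hq hpq
    rw [Function.onFun]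
    rw [Set.disjoint_left]
    rintro y ⟨x, hx, rfl⟩ ⟨x', hx', hxy⟩
    have h1 : f x = TT p.1 x := hfC p x hx.2
    have h2 : f x' = TT q.1 x' := hfC q x' hx'.2
    have hxQ : x ∈ Set.Icc (0 : Fin n → ℝ) 1 := hU hx.1.1
    have hx'Q : x' ∈ Set.Icc (0 : Fin n → ℝ) 1 := hU hx'.1.1
    have hxx : x' = x := hbij.injOn hx'Q hxQ (by rw [h1, h2, hxy])
    rw [hxx] at hx'
    exact Set.disjoint_left.mp (hCdisj p q hpq) hx.2 hx'.2
  have himgm : ∀ p ∈ Fgood, MeasurableSet (TT p.1 '' (U' ∩ C p)) := by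
    intro p hp
    have hd := hdet p (Finset.mem_filter.mp hp).2
    have hdne : (MM p.1).det ≠ 0 := by
      intro h0; rw [h0] at hd; simp at hd
    exact aux_affine_image_measurable _ hdne _ _ (hU'm.inter (hCm p))
  have hkey : volume (f '' U') = volume U' := by
    rw [himg', measure_biUnion_finset himgd himgm]
    have hstep : ∀ p ∈ Fgood, volume (TT p.1 '' (U' ∩ C p)) = volume (U' ∩ C p) := by
      intro p hp
      rw [show TT p.1 '' (U' ∩ C p)
          = (fun x => (MM p.1).mulVec x + cc p.1) '' (U' ∩ C p) from rfl,
        aux_affine_image_volume, hdet p (Finset.mem_filter.mp hp).2, ENNReal.ofReal_one,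
        one_mul]
    rw [Finset.sum_congr rfl hstep]
    rw [← measure_biUnion_finset
      (fun p _ q _ hpq => (hCdisj p q hpq).mono Set.inter_subset_right Set.inter_subset_right)
      (fun p _ => hU'm.inter (hCm p))]
    congr 1
    apply Set.Subset.antisymm
    · exact Set.iUnion₂_subset fun p hp => Set.inter_subset_left
    · intro x hx
      obtain ⟨p, hp, hxC⟩ := hgoodU x hx
      exact Set.mem_biUnion hp ⟨hx, hxC⟩
  have hbad : volume (f '' (U ∩ Z)) = 0 := by
    refine measure_mono_null (fun y hy => ?_) (?_ : volume (⋃ p ∈ Fbad, TT p.1 '' C p) = 0)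
    · obtain ⟨x, hx, rfl⟩ := hy
      have : x ∈ Z := hx.2
      rw [hZ, Set.mem_iUnion₂] at this
      obtain ⟨p, hp, hxC⟩ := this
      exact Set.mem_biUnion hp ⟨x, hxC, (hfC p x hxC).symm⟩
    · rw [← Finset.set_biUnion_coe, measure_biUnion_null_iff Fbad.countable_toSet]
      intro p hp
      have h0 := (Finset.mem_filter.mp hp).2
      calc volume (TT p.1 '' C p)
          = ENNReal.ofReal |(MM p.1).det| * volume (C p) := aux_affine_image_volume _ _ _
        _ = 0 := by rw [h0, mul_zero]
  have hsplit : f '' U ⊆ f '' U' ∪ f '' (U ∩ Z) := by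
    rintro y ⟨x, hx, rfl⟩
    by_cases hz : x ∈ Z
    · exact Or.inr ⟨x, ⟨hx, hz⟩, rfl⟩
    · exact Or.inl ⟨x, ⟨hx, hz⟩, rfl⟩
  have h1 : volume (f '' U) ≤ volume (f '' U') :=
    calc volume (f '' U) ≤ volume (f '' U') + volume (f '' (U ∩ Z)) :=
          le_trans (measure_mono hsplit) (measure_union_le _ _)
      _ = volume (f '' U') := by rw [hbad, add_zero]
  have h2 : volume (f '' U') ≤ volume (f '' U) :=
    measure_mono (Set.image_mono Set.diff_subset)
  rw [le_antisymm h1 h2, hkey, hU'v]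

end Aux


/-- f : ℝ^n → ℝ is a McNaughton function on the unit cube [0,1]^n: continuous on
the cube and piecewise equal, on the cube, to finitely many affine polynomials
with integer coefficients. -/
def IsMcNaughtonOn (n : ℕ) (f : (Fin n → ℝ) → ℝ) : Prop :=
  ContinuousOn f (Set.Icc 0 1) ∧
    ∃ (k : ℕ) (a : Fin k → Fin n → ℤ) (b : Fin k → ℤ),
      ∀ x ∈ Set.Icc (0 : Fin n → ℝ) 1, ∃ i : Fin k,
        f x = (∑ j : Fin n, (a i j : ℝ) * x j) + (b i : ℝ)

/-- f is a McNaughton homeomorphism of [0,1]^n: a bijection of the cube onto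
itself, with inverse g on the cube, all of whose coordinate functions (and those
of g) are McNaughton functions. -/
def IsMcNaughtonHomeo (n : ℕ) (f g : (Fin n → ℝ) → (Fin n → ℝ)) : Prop :=
  Set.BijOn f (Set.Icc 0 1) (Set.Icc 0 1) ∧
  (∀ x ∈ Set.Icc (0 : Fin n → ℝ) 1, g (f x) = x) ∧
  (∀ y ∈ Set.Icc (0 : Fin n → ℝ) 1, f (g y) = y) ∧
  (∀ i : Fin n, IsMcNaughtonOn n (fun x => f x i)) ∧
  (∀ i : Fin n, IsMcNaughtonOn n (fun x => g x i))

/-- every McNaughton homeomorphism of [0,1]^n preserves Lebesgue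
measure: for every measurable U ⊆ [0,1]^n, f(U) is measurable and
μ(f(U)) = μ(U). -/
theorem stmt_9 (n : ℕ) (hn : 1 ≤ n) (f g : (Fin n → ℝ) → (Fin n → ℝ))
    (hf : IsMcNaughtonHomeo n f g) :
    ∀ U ⊆ Set.Icc (0 : Fin n → ℝ) 1, MeasurableSet U →
      MeasurableSet (f '' U) ∧ volume (f '' U) = volume U := by
  classical
  obtain ⟨hbij, hgf, hfg, hfM, hgM⟩ := hf
  have hfc : ContinuousOn f (Set.Icc 0 1) := continuousOn_pi.mpr (fun i => (hfM i).1)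
  have hgc : ContinuousOn g (Set.Icc 0 1) := continuousOn_pi.mpr (fun i => (hgM i).1)
  choose k a b hab using fun i => (hfM i).2
  choose k' a' b' hab' using fun i => (hgM i).2
  obtain ⟨m, MM, cc, D, hMint, hDm, hDdisj, hD, hcovD⟩ := aux_pieces f hfc k a b hab
  obtain ⟨m', NN, dd, Eg, hNint, hEm, hEdisj, hE, hcovE⟩ := aux_pieces g hgc k' a' b' hab'
  intro U hU hUm
  exact ⟨aux_image_measurable hbij hgf hfg hgc hU hUm,
    aux_main f g hbij hgf m m' MM NN cc dd D Eg hMint hNint hDm hEm hDdisj hEdisj hD hE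
      hcovD hcovE U hU hUm⟩
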